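/- (The Claim in the proof of Proposition 1.4.) Assume: (1) V^k = 0 for all k > N (for some fixed natural number N); (2) Condition (iii): for every k and every α ∈ V^k with dα = 0 there exist α₀ ∈ V^k and τ ∈ V^{k−1} with α = α₀ + dτ, dα₀ = 0 and Δα₀ = 0; (3) in every degree, Im d ∩ Ker Δ = Im d ∩ Im Δ. Then for every p and every p-element α_p ∈ V^p such that α_p = dγ_{p−1} = Δβ_{p+1} for some γ_{p−1} ∈ V^{p−1} and β_{p+1} ∈ V^{p+1}, there exists τ_p ∈ V^p such that α_p = dΔτ_p. In other words, Im d ∩ Im Δ = Im(d∘Δ) in every degree. -/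

import Mathlib

open DirectSum
set_option synthInstance.maxHeartbeats 1000000
set_option maxHeartbeats 1000000

lemma graded_comp_aux {V : Type*} [AddCommGroup V] [Module ℂ V]
    (𝒱 : ℤ → Submodule ℂ V) [DirectSum.Decomposition 𝒱]
    (f : V →ₗ[ℂ] V) (c : ℤ) (hf : ∀ j : ℤ, ∀ x ∈ 𝒱 j, f x ∈ 𝒱 (j + c))
    (k : ℤ) (y : V) :
    f (DirectSum.decompose 𝒱 y k : V) = (DirectSum.decompose 𝒱 (f y) (k + c) : V) := by
  induction y using DirectSum.Decomposition.inductionOn 𝒱 with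
  | zero => simp
  | @homogeneous i m =>
    by_cases h : k = i
    · subst h
      rw [DirectSum.decompose_of_mem_same 𝒱 m.2,
        DirectSum.decompose_of_mem_same 𝒱 (hf k m.1 m.2)]
    · rw [DirectSum.decompose_of_mem_ne 𝒱 m.2 (Ne.symm h),
        DirectSum.decompose_of_mem_ne 𝒱 (hf i m.1 m.2) (by omega)]
      simp
  | add a b ha hb =>
    simp only [DirectSum.decompose_add, DirectSum.add_apply, Submodule.coe_add, map_add]
    rw [ha, hb]

lemma graded_preimage_aux {V : Type*} [AddCommGroup V] [Module ℂ V]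
    (𝒱 : ℤ → Submodule ℂ V) [DirectSum.Decomposition 𝒱]
    (f : V →ₗ[ℂ] V) (c : ℤ) (hf : ∀ j : ℤ, ∀ x ∈ 𝒱 j, f x ∈ 𝒱 (j + c))
    (k : ℤ) (x : V) (hx : x ∈ 𝒱 (k + c)) (y : V) (hy : f y = x) :
    ∃ y' ∈ 𝒱 k, f y' = x := by
  refine ⟨(DirectSum.decompose 𝒱 y k : V), SetLike.coe_mem _, ?_⟩
  rw [graded_comp_aux 𝒱 f c hf k y, hy, DirectSum.decompose_of_mem_same 𝒱 hx]


/-- the Claim in the proof of Proposition 1.4: Let `V = ⊕ₖ V^k`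
be a ℤ-graded complex vector space with `d` of degree `+1`, `Δ` of degree
`-1`, `d∘d = 0`, `Δ∘Δ = 0` and `d∘Δ + Δ∘d = 0`.  Assume
(1) `V^k = 0` for all `k > N`;
(2) Condition (iii): every `d`-closed element of `V^k` is, up to a `d`-exact
    term, both `d`- and `Δ`-closed;
(3) in every degree, `Im d ∩ Ker Δ = Im d ∩ Im Δ`.
Then for every `p` and every `α ∈ V^p` with `α = dγ = Δβ` (for some
`γ ∈ V^{p-1}`, `β ∈ V^{p+1}`) there exists `τ ∈ V^p` with `α = dΔτ`;
in other words `Im d ∩ Im Δ = Im (d∘Δ)` in every degree. -/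
theorem imd_inf_imDelta_eq_im_dDelta
    {V : Type*} [AddCommGroup V] [Module ℂ V]
    (𝒱 : ℤ → Submodule ℂ V)
    (hinternal : DirectSum.IsInternal 𝒱)
    (d Δ : V →ₗ[ℂ] V)
    (hd : ∀ (k : ℤ), ∀ x ∈ 𝒱 k, d x ∈ 𝒱 (k + 1))
    (hΔ : ∀ (k : ℤ), ∀ x ∈ 𝒱 k, Δ x ∈ 𝒱 (k - 1))
    (hdd : d ∘ₗ d = 0)
    (hΔΔ : Δ ∘ₗ Δ = 0)
    (hdΔ : d ∘ₗ Δ + Δ ∘ₗ d = 0)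
    (N : ℕ)
    (hbound : ∀ k : ℤ, (N : ℤ) < k → 𝒱 k = ⊥)
    (hiii : ∀ (k : ℤ), ∀ α ∈ 𝒱 k, d α = 0 →
      ∃ α₀ ∈ 𝒱 k, ∃ τ ∈ 𝒱 (k - 1), α = α₀ + d τ ∧ d α₀ = 0 ∧ Δ α₀ = 0)
    (h3 : ∀ k : ℤ,
      LinearMap.range d ⊓ LinearMap.ker Δ ⊓ 𝒱 k
        = LinearMap.range d ⊓ LinearMap.range Δ ⊓ 𝒱 k) :
    (∀ (p : ℤ), ∀ α ∈ 𝒱 p,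
      (∃ γ ∈ 𝒱 (p - 1), α = d γ) → (∃ β ∈ 𝒱 (p + 1), α = Δ β) →
      ∃ τ ∈ 𝒱 p, α = d (Δ τ)) ∧
    (∀ k : ℤ,
      LinearMap.range d ⊓ LinearMap.range Δ ⊓ 𝒱 k
        = LinearMap.range (d ∘ₗ Δ) ⊓ 𝒱 k) := by
  haveI : DirectSum.Decomposition 𝒱 := hinternal.chooseDecomposition
  -- anticommutation pointwise
  have anti : ∀ x : V, d (Δ x) + Δ (d x) = 0 := by
    intro x
    have := congrArg (fun f : V →ₗ[ℂ] V => f x) hdΔ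
    simpa using this
  have hdd' : ∀ x : V, d (d x) = 0 := by
    intro x
    have := congrArg (fun f : V →ₗ[ℂ] V => f x) hdd
    simpa using this
  have hΔΔ' : ∀ x : V, Δ (Δ x) = 0 := by
    intro x
    have := congrArg (fun f : V →ₗ[ℂ] V => f x) hΔΔ
    simpa using this
  -- graded preimages
  have hΔ' : ∀ j : ℤ, ∀ x ∈ 𝒱 j, Δ x ∈ 𝒱 (j + (-1)) := by
    intro j x hx
    have := hΔ j x hx
    simpa [sub_eq_add_neg] using this
  have gd : ∀ (k : ℤ) (x : V), x ∈ 𝒱 (k + 1) → ∀ y : V, d y = x →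
      ∃ y' ∈ 𝒱 k, d y' = x := fun k x hx y hy =>
    graded_preimage_aux 𝒱 d 1 hd k x hx y hy
  have gΔ : ∀ (k : ℤ) (x : V), x ∈ 𝒱 (k + (-1)) → ∀ y : V, Δ y = x →
      ∃ y' ∈ 𝒱 k, Δ y' = x := fun k x hx y hy =>
    graded_preimage_aux 𝒱 Δ (-1) hΔ' k x hx y hy
  -- the main claim, by downward induction
  have key : ∀ n : ℕ, ∀ p : ℤ, (N : ℤ) < p + n → ∀ α ∈ 𝒱 p,
      (∃ γ ∈ 𝒱 (p - 1), α = d γ) → (∃ β ∈ 𝒱 (p + 1), α = Δ β) →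
      ∃ τ ∈ 𝒱 p, α = d (Δ τ) := by
    intro n
    induction n with
    | zero =>
      intro p hp α hα _ _
      have : 𝒱 p = ⊥ := hbound p (by omega)
      refine ⟨0, Submodule.zero_mem _, ?_⟩
      rw [this] at hα
      simp_all
    | succ n ih =>
      intro p hp α hα hγ hβ
      by_cases htriv : (N : ℤ) < p
      · have : 𝒱 p = ⊥ := hbound p htriv
        refine ⟨0, Submodule.zero_mem _, ?_⟩
        rw [this] at hα
        simp_all
      · obtain ⟨γ, hγmem, hγeq⟩ := hγ
        obtain ⟨β, hβmem, hβeq⟩ := hβ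
        -- x := d β ∈ 𝒱 (p+2), d-exact and Δ-closed
        set x := d β with hxdef
        have hxmem : x ∈ 𝒱 (p + 1 + 1) := hd _ β hβmem
        have hΔx : Δ x = 0 := by
          have h1 : d (Δ β) + Δ (d β) = 0 := anti β
          rw [← hβeq, hγeq, hdd' γ, zero_add] at h1
          exact h1
        -- use h3 at degree p+2
        have hx3 : x ∈ LinearMap.range d ⊓ LinearMap.range Δ ⊓ 𝒱 (p + 1 + 1) := by
          rw [← h3]
          exact ⟨⟨⟨β, rfl⟩, hΔx⟩, hxmem⟩
        obtain ⟨⟨⟨y, hy⟩, ⟨z, hz⟩⟩, -⟩ := hx3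
        -- graded preimages for x
        obtain ⟨γ', hγ'mem, hγ'eq⟩ := gd (p + 1) x hxmem y hy
        obtain ⟨β', hβ'mem, hβ'eq⟩ := gΔ (p + 1 + 1 + 1) x (by
          have : p + 1 + 1 + 1 + (-1) = p + 1 + 1 := by ring
          rwa [this]) z hz
        -- apply induction hypothesis at degree p+2
        obtain ⟨τ', hτ'mem, hτ'eq⟩ := ih (p + 1 + 1) (by omega) x hxmem
          ⟨γ', by rwa [show p + 1 + 1 - 1 = p + 1 by ring], hγ'eq.symm⟩
          ⟨β', by rwa [show p + 1 + 1 + 1 = p + 1 + 1 + 1 by ring], hβ'eq.symm⟩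
        -- β - Δ τ' is d-closed of degree p+1
        have hmem2 : β - Δ τ' ∈ 𝒱 (p + 1) := by
          have : Δ τ' ∈ 𝒱 (p + 1 + 1 - 1) := hΔ _ τ' hτ'mem
          exact Submodule.sub_mem _ hβmem (by rwa [show p + 1 + 1 - 1 = p + 1 by ring] at this)
        have hclosed : d (β - Δ τ') = 0 := by
          rw [map_sub, ← hτ'eq, ← hxdef, sub_self]
        obtain ⟨α₀, hα₀mem, σ, hσmem, hdecomp, hdα₀, hΔα₀⟩ := hiii (p + 1) _ hmem2 hclosed
        refine ⟨-σ, by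
          have : σ ∈ 𝒱 (p + 1 - 1) := hσmem
          rw [show p + 1 - 1 = p by ring] at this
          exact Submodule.neg_mem _ this, ?_⟩
        -- α = Δ β = Δ(Δτ' + α₀ + dσ) = -d(Δσ) = d(Δ(-σ))
        have hβ' : β = Δ τ' + (α₀ + d σ) := by
          have := hdecomp
          linear_combination (norm := module) this
        rw [hβeq, hβ', map_add, map_add, hΔΔ' τ', hΔα₀, zero_add, zero_add]
        have h2 : d (Δ σ) + Δ (d σ) = 0 := anti σ
        rw [map_neg, map_neg]
        exact (neg_eq_of_add_eq_zero_right h2).symm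
  have claim1 : ∀ (p : ℤ), ∀ α ∈ 𝒱 p,
      (∃ γ ∈ 𝒱 (p - 1), α = d γ) → (∃ β ∈ 𝒱 (p + 1), α = Δ β) →
      ∃ τ ∈ 𝒱 p, α = d (Δ τ) := by
    intro p
    exact key ((N : ℤ) + 1 - p).toNat p (by omega)
  refine ⟨claim1, fun k => le_antisymm ?_ ?_⟩
  · rintro x ⟨⟨⟨y, hy⟩, ⟨z, hz⟩⟩, hxk⟩
    obtain ⟨γ, hγmem, hγeq⟩ := gd (k - 1) x (by rwa [show k - 1 + 1 = k by ring]) y hy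
    obtain ⟨β, hβmem, hβeq⟩ := gΔ (k + 1) x (by rwa [show k + 1 + (-1) = k by ring]) z hz
    obtain ⟨τ, hτmem, hτeq⟩ := claim1 k x hxk ⟨γ, hγmem, hγeq.symm⟩ ⟨β, hβmem, hβeq.symm⟩
    exact ⟨⟨τ, hτeq.symm⟩, hxk⟩
  · rintro x ⟨⟨τ, hτ⟩, hxk⟩
    refine ⟨⟨⟨Δ τ, by simpa using hτ⟩, ⟨-(d τ), ?_⟩⟩, hxk⟩
    have h2 : d (Δ τ) + Δ (d τ) = 0 := anti τ
    have : x = d (Δ τ) := by simpa using hτ.symm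
    rw [map_neg, this]
    exact (neg_eq_of_add_eq_zero_left h2)
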